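/- Let G be a graph and suppose there exist vertices u, v with N[u] ⊆ N[v]. Then the domination polynomial satisfies D(G,x) = x·D(G/v,x) + D(G−v,x) + x·D(G−N[v],x), where G/v denotes vertex contraction of v and G−N[v] deletes the closed neighborhood of v. -/

import Mathlib

open Polynomial

/-- A finite set of vertices dominates the graph. -/
def Dominates {V : Type*} (G : SimpleGraph V) (U : Finset V) : Prop :=
  ∀ v : V, v ∈ U ∨ ∃ u ∈ U, G.Adj u v

/-- The number of dominating sets of size `i`. -/
noncomputable def domCount {V : Type*} [Fintype V] (G : SimpleGraph V) (i : ℕ) : ℕ :=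
  Nat.card {U : Finset V // U.card = i ∧ Dominates G U}

/-- The domination polynomial. -/
noncomputable def domPoly {V : Type*} [Fintype V] (G : SimpleGraph V) : Polynomial ℤ :=
  ∑ i ∈ Finset.range (Fintype.card V + 1), Polynomial.C (domCount G i : ℤ) * Polynomial.X ^ i

/-- The graph `G/v`, obtained by contracting the vertex `v`: the vertex set is `V \ {v}`,
with all edges of `G - v` together with all edges between pairs of neighbors of `v`. -/
def contractVert {V : Type*} (G : SimpleGraph V) (v : V) : SimpleGraph {w : V // w ≠ v} :=
  SimpleGraph.fromRel (fun a b => G.Adj a b ∨ (G.Adj v a ∧ G.Adj v b))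

/-- The graph `G - v`. -/
def delVert {V : Type*} (G : SimpleGraph V) (v : V) : SimpleGraph {w : V // w ≠ v} :=
  G.comap (fun w => (w : V))

/-- The graph `G - N[v]`. -/
def delClosedNbhd {V : Type*} (G : SimpleGraph V) (v : V) :
    SimpleGraph {w : V // w ≠ v ∧ ¬ G.Adj v w} :=
  G.comap (fun w => (w : V))

set_option linter.unusedSectionVars false

section Aux

lemma nat_card_split {α : Type*} [Finite α] (Q p : α → Prop) :
    Nat.card {a // Q a} = Nat.card {a // Q a ∧ p a} + Nat.card {a // Q a ∧ ¬ p a} := by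
  classical
  have e : {a // Q a} ≃ {a // Q a ∧ p a} ⊕ {a // Q a ∧ ¬ p a} :=
    (Equiv.sumCompl (fun x : {a // Q a} => p x.1)).symm.trans
      (Equiv.sumCongr (Equiv.subtypeSubtypeEquivSubtypeInter Q p)
        (Equiv.subtypeSubtypeEquivSubtypeInter Q (fun a => ¬ p a)))
  rw [Nat.card_congr e, Nat.card_sum]

lemma subtype_map_subtype {α : Type*} {p : α → Prop} [DecidablePred p]
    (s : Finset {x // p x}) :
    (s.map (Function.Embedding.subtype p)).subtype p = s := by
  ext a
  simp only [Finset.mem_subtype, Finset.mem_map, Function.Embedding.coe_subtype]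
  constructor
  · rintro ⟨b, hb, hba⟩
    rwa [show b = a from Subtype.ext hba] at hb
  · intro ha
    exact ⟨a, ha, rfl⟩

lemma domCount_zero {W : Type*} [Fintype W] (H : SimpleGraph W) (w : W) :
    domCount H 0 = 0 := by
  rw [domCount, Nat.card_eq_zero]
  left
  constructor
  rintro ⟨U, hU, hdom⟩
  rw [Finset.card_eq_zero] at hU
  subst hU
  rcases hdom w with h | ⟨x, hx, -⟩
  · simp at h
  · simp at hx

lemma domCount_large {W : Type*} [Fintype W] (H : SimpleGraph W) {i : ℕ}
    (hi : Fintype.card W < i) : domCount H i = 0 := by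
  rw [domCount, Nat.card_eq_zero]
  left
  constructor
  rintro ⟨U, hU, -⟩
  have := Finset.card_le_univ U
  omega

lemma domPoly_coeff {W : Type*} [Fintype W] (H : SimpleGraph W) (n : ℕ) :
    (domPoly H).coeff n = (domCount H n : ℤ) := by
  rw [domPoly, finset_sum_coeff]
  simp only [coeff_C_mul, coeff_X_pow, mul_ite, mul_one, mul_zero]
  rw [Finset.sum_ite_eq]
  split
  · rfl
  · next hmem =>
    rw [domCount_large H (by simp [Finset.mem_range] at hmem; omega)]
    simp

lemma contractVert_adj {V : Type*} (G : SimpleGraph V) (v : V) (a b : {w : V // w ≠ v}) :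
    (contractVert G v).Adj a b ↔ a ≠ b ∧ (G.Adj ↑a ↑b ∨ (G.Adj v ↑a ∧ G.Adj v ↑b)) := by
  rw [contractVert, SimpleGraph.fromRel_adj]
  have := G.adj_comm (↑a : V) (↑b : V)
  tauto

end Aux

section Main

variable {V : Type*} [Fintype V] [DecidableEq V] (G : SimpleGraph V) [DecidableRel G.Adj]
  {u v : V}

lemma card_delVert (huv : u ≠ v) (hu : G.Adj v u)
    (hN : ∀ w, G.Adj u w → w = v ∨ G.Adj v w) (i : ℕ) :
    Nat.card {U : Finset V // (U.card = i ∧ Dominates G U) ∧ v ∉ U}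
      = domCount (delVert G v) i := by
  apply Nat.card_congr
  refine ⟨fun U => ⟨(U.1).subtype (· ≠ v), ?_, ?_⟩,
          fun U => ⟨U.1.map (Function.Embedding.subtype _), ⟨?_, ?_⟩, ?_⟩, ?_, ?_⟩
  · have hall : ∀ x ∈ (U.1 : Finset V), x ≠ v := fun x hx hxv => U.2.2 (hxv ▸ hx)
    rw [Finset.card_subtype, Finset.filter_true_of_mem hall, U.2.1.1]
  · intro w
    rcases U.2.1.2 ↑w with hw | ⟨x, hx, hadj⟩
    · left; exact Finset.mem_subtype.2 hw
    · right
      exact ⟨⟨x, fun hxv => U.2.2 (hxv ▸ hx)⟩, Finset.mem_subtype.2 hx, hadj⟩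
  · rw [Finset.card_map, U.2.1]
  · intro w
    by_cases hwv : w = v
    · subst hwv
      rcases U.2.2 ⟨u, huv⟩ with hu' | ⟨a, ha, hadj⟩
      · right
        exact ⟨u, Finset.mem_map.2 ⟨⟨u, huv⟩, hu', rfl⟩, G.adj_symm hu⟩
      · have hadj' : G.Adj ↑a u := hadj
        rcases hN ↑a (G.adj_symm hadj') with e | h'
        · exact absurd e a.2
        · right
          exact ⟨↑a, Finset.mem_map.2 ⟨a, ha, rfl⟩, G.adj_symm h'⟩
    · rcases U.2.2 ⟨w, hwv⟩ with hw | ⟨a, ha, hadj⟩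
      · left; exact Finset.mem_map.2 ⟨⟨w, hwv⟩, hw, rfl⟩
      · right; exact ⟨↑a, Finset.mem_map.2 ⟨a, ha, rfl⟩, hadj⟩
  · intro hmem
    rcases Finset.mem_map.1 hmem with ⟨a, -, ha⟩
    exact a.2 ha
  · intro U
    apply Subtype.ext
    have hall : ∀ x ∈ (U.1 : Finset V), x ≠ v := fun x hx hxv => U.2.2 (hxv ▸ hx)
    dsimp only
    rw [Finset.subtype_map]
    exact Finset.filter_true_of_mem hall
  · intro U
    exact Subtype.ext (subtype_map_subtype U.1)

lemma card_contract (huv : u ≠ v) (hu : G.Adj v u)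
    (hN : ∀ w, G.Adj u w → w = v ∨ G.Adj v w) (j : ℕ) :
    Nat.card {U : Finset V //
        ((U.card = j + 1 ∧ Dominates G U) ∧ v ∈ U) ∧ ∃ x ∈ U, G.Adj v x}
      = domCount (contractVert G v) j := by
  apply Nat.card_congr
  refine ⟨fun U => ⟨(U.1.erase v).subtype (· ≠ v), ?_, ?_⟩,
          fun U => ⟨insert v (U.1.map (Function.Embedding.subtype _)), ⟨⟨?_, ?_⟩, ?_⟩, ?_⟩,
          ?_, ?_⟩
  · rw [Finset.card_subtype,
      Finset.filter_true_of_mem (fun x hx => (Finset.mem_erase.1 hx).1),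
      Finset.card_erase_of_mem U.2.1.2, U.2.1.1.1]
    omega
  · intro w
    by_cases hw : (w : V) ∈ U.1
    · left
      exact Finset.mem_subtype.2 (Finset.mem_erase.2 ⟨w.2, hw⟩)
    · rcases U.2.1.1.2 ↑w with hw' | ⟨x, hx, hadj⟩
      · exact absurd hw' hw
      · by_cases hxv : x = v
        · rw [hxv] at hadj
          obtain ⟨n, hn, hnv⟩ := U.2.2
          have hnv' : n ≠ v := fun e => G.irrefl (e ▸ hnv)
          right
          refine ⟨⟨n, hnv'⟩, Finset.mem_subtype.2 (Finset.mem_erase.2 ⟨hnv', hn⟩), ?_⟩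
          rw [contractVert_adj]
          exact ⟨fun e => hw (congrArg Subtype.val e ▸ hn), Or.inr ⟨hnv, hadj⟩⟩
        · right
          refine ⟨⟨x, hxv⟩, Finset.mem_subtype.2 (Finset.mem_erase.2 ⟨hxv, hx⟩), ?_⟩
          rw [contractVert_adj]
          exact ⟨fun e => G.ne_of_adj hadj (congrArg Subtype.val e), Or.inl hadj⟩
  · have hvM : v ∉ U.1.map (Function.Embedding.subtype _) := by
      intro hmem
      rcases Finset.mem_map.1 hmem with ⟨a, -, ha⟩
      exact a.2 ha
    rw [Finset.card_insert_of_notMem hvM, Finset.card_map, U.2.1]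
  · intro w
    by_cases hwv : w = v
    · subst hwv; left; exact Finset.mem_insert_self _ _
    · by_cases hadj : G.Adj v w
      · right; exact ⟨v, Finset.mem_insert_self _ _, hadj⟩
      · rcases U.2.2 ⟨w, hwv⟩ with hw | ⟨a, ha, hadj'⟩
        · left
          exact Finset.mem_insert_of_mem (Finset.mem_map.2 ⟨⟨w, hwv⟩, hw, rfl⟩)
        · rw [contractVert_adj] at hadj'
          rcases hadj'.2 with h' | ⟨h1, h2⟩
          · right
            exact ⟨↑a, Finset.mem_insert_of_mem (Finset.mem_map.2 ⟨a, ha, rfl⟩), h'⟩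
          · exact absurd h2 hadj
  · exact Finset.mem_insert_self _ _
  · rcases U.2.2 ⟨u, huv⟩ with hu' | ⟨a, ha, hadj'⟩
    · exact ⟨u, Finset.mem_insert_of_mem (Finset.mem_map.2 ⟨⟨u, huv⟩, hu', rfl⟩), hu⟩
    · rw [contractVert_adj] at hadj'
      have hva : G.Adj v ↑a := by
        rcases hadj'.2 with h' | ⟨h1, h2⟩
        · rcases hN ↑a (G.adj_symm h') with e | h''
          · exact absurd e a.2
          · exact h''
        · exact h1
      exact ⟨↑a, Finset.mem_insert_of_mem (Finset.mem_map.2 ⟨a, ha, rfl⟩), hva⟩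
  · intro U
    apply Subtype.ext
    dsimp only
    rw [Finset.subtype_map,
      Finset.filter_true_of_mem (fun x hx => (Finset.mem_erase.1 hx).1),
      Finset.insert_erase U.2.1.2]
  · intro U
    apply Subtype.ext
    have hvM : v ∉ U.1.map (Function.Embedding.subtype fun w => w ≠ v) := by
      intro hmem
      rcases Finset.mem_map.1 hmem with ⟨a, -, ha⟩
      exact a.2 ha
    dsimp only
    rw [Finset.erase_insert hvM]
    exact subtype_map_subtype U.1

lemma card_delNbhd (huv : u ≠ v) (hu : G.Adj v u)
    (hN : ∀ w, G.Adj u w → w = v ∨ G.Adj v w) (j : ℕ) :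
    Nat.card {U : Finset V //
        ((U.card = j + 1 ∧ Dominates G U) ∧ v ∈ U) ∧ ¬ ∃ x ∈ U, G.Adj v x}
      = domCount (delClosedNbhd G v) j := by
  apply Nat.card_congr
  refine ⟨fun U => ⟨(U.1.erase v).subtype (fun w => w ≠ v ∧ ¬ G.Adj v w), ?_, ?_⟩,
          fun U => ⟨insert v (U.1.map (Function.Embedding.subtype _)), ⟨⟨?_, ?_⟩, ?_⟩, ?_⟩,
          ?_, ?_⟩
  · rw [Finset.card_subtype,
      Finset.filter_true_of_mem (fun x hx => ⟨(Finset.mem_erase.1 hx).1,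
        fun hadj => U.2.2 ⟨x, (Finset.mem_erase.1 hx).2, hadj⟩⟩),
      Finset.card_erase_of_mem U.2.1.2, U.2.1.1.1]
    omega
  · intro w
    rcases U.2.1.1.2 ↑w with hw | ⟨x, hx, hadj⟩
    · left; exact Finset.mem_subtype.2 (Finset.mem_erase.2 ⟨w.2.1, hw⟩)
    · have hxv : x ≠ v := fun e => w.2.2 (e ▸ hadj)
      have hxa : ¬ G.Adj v x := fun ha => U.2.2 ⟨x, hx, ha⟩
      right
      exact ⟨⟨x, hxv, hxa⟩, Finset.mem_subtype.2 (Finset.mem_erase.2 ⟨hxv, hx⟩), hadj⟩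
  · have hvM : v ∉ U.1.map (Function.Embedding.subtype _) := by
      intro hmem
      rcases Finset.mem_map.1 hmem with ⟨a, -, ha⟩
      exact a.2.1 ha
    rw [Finset.card_insert_of_notMem hvM, Finset.card_map, U.2.1]
  · intro w
    by_cases hwv : w = v
    · subst hwv; left; exact Finset.mem_insert_self _ _
    · by_cases hadj : G.Adj v w
      · right; exact ⟨v, Finset.mem_insert_self _ _, hadj⟩
      · rcases U.2.2 ⟨w, hwv, hadj⟩ with hw | ⟨a, ha, hadj'⟩
        · left
          exact Finset.mem_insert_of_mem (Finset.mem_map.2 ⟨⟨w, hwv, hadj⟩, hw, rfl⟩)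
        · right
          exact ⟨↑a, Finset.mem_insert_of_mem (Finset.mem_map.2 ⟨a, ha, rfl⟩), hadj'⟩
  · exact Finset.mem_insert_self _ _
  · rintro ⟨x, hx, hadj⟩
    rcases Finset.mem_insert.1 hx with e | hm
    · exact G.irrefl (e ▸ hadj)
    · obtain ⟨a, -, rfl⟩ := Finset.mem_map.1 hm
      exact a.2.2 hadj
  · intro U
    apply Subtype.ext
    dsimp only
    rw [Finset.subtype_map,
      Finset.filter_true_of_mem (fun x hx => ⟨(Finset.mem_erase.1 hx).1,
        fun hadj => U.2.2 ⟨x, (Finset.mem_erase.1 hx).2, hadj⟩⟩),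
      Finset.insert_erase U.2.1.2]
  · intro U
    apply Subtype.ext
    have hvM : v ∉ U.1.map (Function.Embedding.subtype fun w => w ≠ v ∧ ¬ G.Adj v w) := by
      intro hmem
      rcases Finset.mem_map.1 hmem with ⟨a, -, ha⟩
      exact a.2.1 ha
    dsimp only
    rw [Finset.erase_insert hvM]
    exact subtype_map_subtype U.1

lemma count_succ (huv : u ≠ v) (hu : G.Adj v u)
    (hN : ∀ w, G.Adj u w → w = v ∨ G.Adj v w) (j : ℕ) :
    domCount G (j + 1) =
      domCount (contractVert G v) j + domCount (delVert G v) (j + 1)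
        + domCount (delClosedNbhd G v) j := by
  classical
  have h1 : domCount G (j + 1)
      = Nat.card {U : Finset V // (U.card = j + 1 ∧ Dominates G U) ∧ v ∈ U}
        + Nat.card {U : Finset V // (U.card = j + 1 ∧ Dominates G U) ∧ v ∉ U} :=
    nat_card_split _ _
  have h2 : Nat.card {U : Finset V // (U.card = j + 1 ∧ Dominates G U) ∧ v ∈ U}
      = Nat.card {U : Finset V //
          ((U.card = j + 1 ∧ Dominates G U) ∧ v ∈ U) ∧ ∃ x ∈ U, G.Adj v x}
        + Nat.card {U : Finset V //
          ((U.card = j + 1 ∧ Dominates G U) ∧ v ∈ U) ∧ ¬ ∃ x ∈ U, G.Adj v x} :=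
    nat_card_split _ _
  rw [h1, h2, card_contract G huv hu hN j, card_delNbhd G huv hu hN j,
    card_delVert G huv hu hN (j + 1)]
  omega

end Main

theorem domPoly_recursion {V : Type*} [Fintype V] [DecidableEq V] (G : SimpleGraph V)
    [DecidableRel G.Adj] (u v : V) (huv : u ≠ v)
    (h : insert u (G.neighborSet u) ⊆ insert v (G.neighborSet v)) :
    domPoly G =
      X * domPoly (contractVert G v) + domPoly (delVert G v)
        + X * domPoly (delClosedNbhd G v) := by
  classical
  have hu : G.Adj v u := by
    rcases Set.mem_insert_iff.1 (h (Set.mem_insert u _)) with e | hadj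
    · exact absurd e huv
    · exact hadj
  have hN : ∀ w, G.Adj u w → w = v ∨ G.Adj v w := by
    intro w hw
    rcases Set.mem_insert_iff.1 (h (Set.mem_insert_of_mem _ hw)) with e | hadj
    · exact Or.inl e
    · exact Or.inr hadj
  ext n
  rw [coeff_add, coeff_add, domPoly_coeff]
  cases n with
  | zero =>
    rw [mul_coeff_zero, coeff_X_zero, zero_mul, mul_coeff_zero, coeff_X_zero, zero_mul,
      domPoly_coeff, domCount_zero G u, domCount_zero (delVert G v) ⟨u, huv⟩]
    simp
  | succ n =>
    rw [coeff_X_mul, coeff_X_mul, domPoly_coeff, domPoly_coeff, domPoly_coeff,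
      count_succ G huv hu hN n]
    push_cast
    ring
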